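/- Support size bounded by the number of worlds (Lemma 9): For every stable indicative policy σ : Ω → Δ(𝓛 × 𝓜), there exists a stable indicative policy σ' : Ω → Δ(𝓛 × 𝓜) whose support {(⪯,M) : σ'(⪯,M | ω) > 0 for some ω} has cardinality at most |Ω|, and which satisfies u(σ') ≥ u(σ). -/

import Mathlib

open Finset

namespace MP

/-- A probability distribution on a finite type, as a nonnegative function summing to 1. -/
def IsDist {X : Type*} [Fintype X] (p : X → ℝ) : Prop :=
  (∀ x, 0 ≤ p x) ∧ ∑ x, p x = 1

/-- Expected value of `v : Ω → ℝ` under belief `p`. -/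
noncomputable def eVal {Ω : Type*} [Fintype Ω] (v : Ω → ℝ) (p : Ω → ℝ) : ℝ :=
  ∑ ω, p ω * v ω

/-- A matching `M : A ≃ B` is stable with respect to belief `p`. -/
def StableAt {Ω A B : Type*} [Fintype Ω]
    (vA : A → B → Ω → ℝ) (vB : B → A → Ω → ℝ) (M : A ≃ B) (p : Ω → ℝ) : Prop :=
  ∀ a b, eVal (vA a (M a)) p ≥ eVal (vA a b) p ∨ eVal (vB b (M.symm b)) p ≥ eVal (vB b a) p

/-- The principal's utility of matching `M` in world `ω`. -/
noncomputable def uMatch {Ω A B : Type*} [Fintype A]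
    (u : A → B → Ω → ℝ) (M : A ≃ B) (ω : Ω) : ℝ :=
  ∑ a, u a (M a) ω

/-- A signaling policy: a distribution over meta-signals `S` for each world. -/
def IsPolicy {Ω S : Type*} [Fintype S] (σ : Ω → S → ℝ) : Prop :=
  ∀ ω, IsDist (σ ω)

/-- Marginal probability of meta-signal `s`. -/
noncomputable def sigPr {Ω S : Type*} [Fintype Ω] (μ : Ω → ℝ) (σ : Ω → S → ℝ) (s : S) : ℝ :=
  ∑ ω, μ ω * σ ω s

/-- Posterior belief induced by meta-signal `s`. -/
noncomputable def post {Ω S : Type*} [Fintype Ω] (μ : Ω → ℝ) (σ : Ω → S → ℝ) (s : S) : Ω → ℝ :=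
  fun ω => μ ω * σ ω s / sigPr μ σ s

/-- Expected utility of a policy, where `util s ω` is the principal's payoff
of meta-signal `s` in world `ω`. -/
noncomputable def polU {Ω S : Type*} [Fintype Ω] [Fintype S]
    (μ : Ω → ℝ) (σ : Ω → S → ℝ) (util : S → Ω → ℝ) : ℝ :=
  ∑ ω, μ ω * ∑ s, σ ω s * util s ω

/-- Stability of a public policy with meta-signals in `G × (A ≃ B)`. -/
def StablePublic {Ω A B G : Type*} [Fintype Ω]
    (μ : Ω → ℝ) (vA : A → B → Ω → ℝ) (vB : B → A → Ω → ℝ)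
    (σ : Ω → (G × (A ≃ B)) → ℝ) : Prop :=
  ∀ s : G × (A ≃ B), 0 < sigPr μ σ s → StableAt vA vB s.2 (post μ σ s)

/-- A (raw) preference profile: for each agent on either side, a `Bool`-valued
relation on the other side; `L.1 a y y' = true` means `y ⪯_a y'`. -/
abbrev Pref (A B : Type*) := (A → B → B → Bool) × (B → A → A → Bool)

/-- `r` is a total preorder. -/
def TotalPre {X : Type*} (r : X → X → Bool) : Prop :=
  (∀ x y, r x y = true ∨ r y x = true) ∧
  ∀ x y z, r x y = true → r y z = true → r x z = true

/-- A preference profile assigns every agent a total preorder on the other side. -/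
def ValidProfile {A B : Type*} (L : Pref A B) : Prop :=
  (∀ a, TotalPre (L.1 a)) ∧ (∀ b, TotalPre (L.2 b))

/-- `p` lies in the cell `C_⪯` of the profile `L`. -/
def InCell {Ω A B : Type*} [Fintype Ω] (vA : A → B → Ω → ℝ) (vB : B → A → Ω → ℝ)
    (L : Pref A B) (p : Ω → ℝ) : Prop :=
  (∀ a y y', L.1 a y y' = true → eVal (vA a y) p ≤ eVal (vA a y') p) ∧
  (∀ b x x', L.2 b x x' = true → eVal (vB b x) p ≤ eVal (vB b x') p)

/-- An indicative policy: every meta-signal `(⪯, M)` sent with positive probability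
consists of a genuine preference profile whose induced posterior lies in `C_⪯`. -/
def Indicative {Ω A B : Type*} [Fintype Ω]
    (μ : Ω → ℝ) (vA : A → B → Ω → ℝ) (vB : B → A → Ω → ℝ)
    (σ : Ω → (Pref A B × (A ≃ B)) → ℝ) : Prop :=
  ∀ s : Pref A B × (A ≃ B), 0 < sigPr μ σ s →
    ValidProfile s.1 ∧ InCell vA vB s.1 (post μ σ s)

lemma carath_step {Ω S : Type} [Fintype Ω] [Fintype S] [DecidableEq S]
    (x : S → Ω → ℝ) (c : S → ℝ) (T : Finset S) :
    ∀ (l : S → ℝ),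
      (∀ s ∈ T, ∀ ω, 0 ≤ x s ω) → (∀ s ∈ T, ∃ ω, 0 < x s ω) →
      (∀ s ∈ T, 0 ≤ l s) →
      ∃ (T' : Finset S) (l' : S → ℝ), T' ⊆ T ∧ T'.card ≤ Fintype.card Ω ∧
        (∀ s ∈ T', 0 ≤ l' s) ∧
        (∀ ω, ∑ s ∈ T', l' s * x s ω = ∑ s ∈ T, l s * x s ω) ∧
        ∑ s ∈ T, l s * c s ≤ ∑ s ∈ T', l' s * c s := by
  classical
  induction T using Finset.strongInduction with
  | _ T ih =>
    intro l hx hxne hl0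
    by_cases hcard : T.card ≤ Fintype.card Ω
    · exact ⟨T, l, Finset.Subset.refl T, hcard, hl0, fun ω => rfl, le_refl _⟩
    · have hdep : ¬ LinearIndependent ℝ (fun s : T => x (s : S)) := by
        intro h
        have h2 := h.fintype_card_le_finrank
        rw [Module.finrank_fintype_fun_eq_card, Fintype.card_coe] at h2
        omega
      obtain ⟨g, hg0, i0, hgne⟩ := Fintype.not_linearIndependent_iff.mp hdep
      set d : S → ℝ := fun s => if h : s ∈ T then g ⟨s, h⟩ else 0 with hd
      have hdsum : ∀ ω, ∑ s ∈ T, d s * x s ω = 0 := by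
        intro ω
        have := congrFun hg0 ω
        simp only [Finset.sum_apply, Pi.smul_apply, Pi.zero_apply, smul_eq_mul] at this
        rw [← Finset.sum_attach T (fun s => d s * x s ω)]
        rw [← this]
        apply Finset.sum_congr rfl
        intro i _
        simp [hd, i.2]
      have hdne : ∃ s ∈ T, d s ≠ 0 := ⟨i0, i0.2, by simpa [hd, i0.2] using hgne⟩
      have hsigns : ∀ e : S → ℝ, (∀ ω, ∑ s ∈ T, e s * x s ω = 0) → (∃ s ∈ T, e s ≠ 0) →
          ∃ s ∈ T, e s < 0 := by
        intro e hes ⟨s1, hs1T, hs1⟩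
        by_contra hall
        push_neg at hall
        have hs1pos : 0 < e s1 := lt_of_le_of_ne (hall s1 hs1T) (Ne.symm hs1)
        obtain ⟨ω1, hω1⟩ := hxne s1 hs1T
        have hterm : ∀ s ∈ T, 0 ≤ e s * x s ω1 :=
          fun s hs => mul_nonneg (hall s hs) (hx s hs ω1)
        have := (Finset.sum_eq_zero_iff_of_nonneg hterm).mp (hes ω1) s1 hs1T
        nlinarith
      have hneg : ∃ s ∈ T, d s < 0 := hsigns d hdsum hdne
      have hpos : ∃ s ∈ T, (-d) s < 0 := by
        refine hsigns (-d) (fun ω => ?_) ?_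
        · simp only [Pi.neg_apply, neg_mul, Finset.sum_neg_distrib]
          rw [hdsum ω]; ring
        · obtain ⟨s, hs, h⟩ := hdne
          exact ⟨s, hs, by simpa using h⟩
      obtain ⟨e, hesum, heobj, heneg⟩ :
          ∃ e : S → ℝ, (∀ ω, ∑ s ∈ T, e s * x s ω = 0) ∧ 0 ≤ ∑ s ∈ T, e s * c s ∧
            ∃ s ∈ T, e s < 0 := by
        by_cases hc : 0 ≤ ∑ s ∈ T, d s * c s
        · exact ⟨d, hdsum, hc, hneg⟩
        · refine ⟨-d, fun ω => ?_, ?_, ?_⟩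
          · simp only [Pi.neg_apply, neg_mul, Finset.sum_neg_distrib]
            rw [hdsum ω]; ring
          · simp only [Pi.neg_apply, neg_mul, Finset.sum_neg_distrib]
            linarith
          · obtain ⟨s, hs, h⟩ := hpos
            exact ⟨s, hs, by simpa using h⟩
      set F : Finset S := T.filter (fun s => e s < 0) with hF
      have hFne : F.Nonempty := by
        obtain ⟨s, hs, h⟩ := heneg
        exact ⟨s, Finset.mem_filter.mpr ⟨hs, h⟩⟩
      set t : ℝ := F.inf' hFne (fun s => l s / (-e s)) with ht
      have htnn : 0 ≤ t := by
        apply Finset.le_inf'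
        intro s hs
        have hsT := (Finset.mem_filter.mp hs).1
        have hse := (Finset.mem_filter.mp hs).2
        exact div_nonneg (hl0 s hsT) (by linarith)
      obtain ⟨s0, hs0F, hs0⟩ := F.exists_mem_eq_inf' hFne (fun s => l s / (-e s))
      have hs0T := (Finset.mem_filter.mp hs0F).1
      have hs0e : e s0 < 0 := (Finset.mem_filter.mp hs0F).2
      set l2 : S → ℝ := fun s => l s + t * e s with hl2
      have hl2nn : ∀ s ∈ T, 0 ≤ l2 s := by
        intro s hs
        by_cases hes : e s < 0
        · have h1 : t ≤ l s / (-e s) := Finset.inf'_le _ (Finset.mem_filter.mpr ⟨hs, hes⟩)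
          have h2 : t * (-e s) ≤ l s := (le_div_iff₀ (by linarith)).mp h1
          simp only [hl2]; nlinarith
        · push_neg at hes
          have := hl0 s hs
          simp only [hl2]; nlinarith
      have hl2s0 : l2 s0 = 0 := by
        have hne : e s0 ≠ 0 := ne_of_lt hs0e
        simp only [hl2, ht, hs0]
        field_simp
        ring
      have hl2sum : ∀ ω, ∑ s ∈ T, l2 s * x s ω = ∑ s ∈ T, l s * x s ω := by
        intro ω
        simp only [hl2, add_mul, Finset.sum_add_distrib, mul_assoc, ← Finset.mul_sum]
        rw [hesum ω]; ring
      have hl2obj : ∑ s ∈ T, l s * c s ≤ ∑ s ∈ T, l2 s * c s := by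
        simp only [hl2, add_mul, Finset.sum_add_distrib, mul_assoc, ← Finset.mul_sum]
        nlinarith
      have hsub : T.erase s0 ⊂ T := Finset.erase_ssubset hs0T
      have hsum_erase : ∀ ω, ∑ s ∈ T.erase s0, l2 s * x s ω = ∑ s ∈ T, l s * x s ω := by
        intro ω
        rw [← hl2sum ω, Finset.sum_erase _ (by rw [hl2s0]; ring)]
      have hobj_erase : ∑ s ∈ T, l s * c s ≤ ∑ s ∈ T.erase s0, l2 s * c s := by
        rw [Finset.sum_erase _ (by rw [hl2s0]; ring)]
        exact hl2obj
      obtain ⟨T', l', hT'sub, hT'card, hl'nn, hl'sum, hl'obj⟩ :=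
        ih (T.erase s0) hsub l2
          (fun s hs => hx s (Finset.mem_of_mem_erase hs))
          (fun s hs => hxne s (Finset.mem_of_mem_erase hs))
          (fun s hs => hl2nn s (Finset.mem_of_mem_erase hs))
      refine ⟨T', l', hT'sub.trans (Finset.erase_subset _ _), hT'card, hl'nn, ?_, ?_⟩
      · intro ω; rw [hl'sum ω, hsum_erase ω]
      · exact le_trans hobj_erase hl'obj

/-- **Support size bounded by the number of worlds** (Lemma 9): every stable
indicative policy can be replaced by a stable indicative policy supported on
at most `|Ω|` meta-signals, with at least the same expected utility. -/
theorem support_size_le_card_worlds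
    {Ω A B : Type} [Fintype Ω] [Nonempty Ω] [Fintype A] [Fintype B]
    [DecidableEq A] [DecidableEq B]
    (μ : Ω → ℝ) (hμ : IsDist μ) (hμpos : ∀ ω, 0 < μ ω)
    (vA : A → B → Ω → ℝ) (vB : B → A → Ω → ℝ) (u : A → B → Ω → ℝ)
    (σ : Ω → (Pref A B × (A ≃ B)) → ℝ)
    (hpol : IsPolicy σ)
    (hstab : ∀ s, 0 < sigPr μ σ s → StableAt vA vB s.2 (post μ σ s))
    (hind : Indicative μ vA vB σ) :
    ∃ σ' : Ω → (Pref A B × (A ≃ B)) → ℝ,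
      IsPolicy σ' ∧
      (∀ s, 0 < sigPr μ σ' s → StableAt vA vB s.2 (post μ σ' s)) ∧
      Indicative μ vA vB σ' ∧
      Set.ncard {s : Pref A B × (A ≃ B) | ∃ ω, 0 < σ' ω s} ≤ Fintype.card Ω ∧
      polU μ σ (fun s ω => uMatch u s.2 ω) ≤ polU μ σ' (fun s ω => uMatch u s.2 ω) := by
  classical
  set x : Pref A B × (A ≃ B) → Ω → ℝ := fun s ω => μ ω * σ ω s with hx'
  set c : Pref A B × (A ≃ B) → ℝ := fun s => ∑ ω, μ ω * σ ω s * uMatch u s.2 ω with hc'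
  set T : Finset (Pref A B × (A ≃ B)) := Finset.univ.filter (fun s => ∃ ω, 0 < σ ω s) with hT
  have hσnn : ∀ ω (s : Pref A B × (A ≃ B)), 0 ≤ σ ω s := fun ω s => (hpol ω).1 s
  have hσ0 : ∀ s ∉ T, ∀ ω, σ ω s = 0 := by
    intro s hs ω
    simp only [hT, Finset.mem_filter, Finset.mem_univ, true_and] at hs
    push_neg at hs
    exact le_antisymm (hs ω) (hσnn ω s)
  have hx : ∀ s ∈ T, ∀ ω, 0 ≤ x s ω := fun s _ ω => mul_nonneg (hμpos ω).le (hσnn ω s)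
  have hxne : ∀ s ∈ T, ∃ ω, 0 < x s ω := by
    intro s hs
    simp only [hT, Finset.mem_filter, Finset.mem_univ, true_and] at hs
    obtain ⟨ω, hω⟩ := hs
    exact ⟨ω, mul_pos (hμpos ω) hω⟩
  obtain ⟨T', l', hsub, hcard, hl'nn, hl'sum, hl'obj⟩ :=
    carath_step x c T (fun _ => 1) hx hxne (fun _ _ => zero_le_one)
  have hTsum : ∀ ω, ∑ s ∈ T, (1:ℝ) * x s ω = μ ω := by
    intro ω
    simp only [one_mul, hx']
    rw [← Finset.mul_sum]
    have h1 : ∑ s ∈ T, σ ω s = ∑ s, σ ω s := by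
      apply Finset.sum_subset (Finset.subset_univ T)
      intro s _ hs
      exact hσ0 s hs ω
    rw [h1, (hpol ω).2, mul_one]
  -- the new policy
  set σ' : Ω → Pref A B × (A ≃ B) → ℝ := fun ω s => if s ∈ T' then l' s * σ ω s else 0 with hσ'
  have hσ'nn : ∀ ω s, 0 ≤ σ' ω s := by
    intro ω s
    simp only [hσ']
    split
    · exact mul_nonneg (hl'nn s ‹_›) (hσnn ω s)
    · exact le_refl 0
  have hpol' : IsPolicy σ' := by
    intro ω
    refine ⟨hσ'nn ω, ?_⟩
    have h1 : ∑ s, σ' ω s = ∑ s ∈ T', l' s * σ ω s := by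
      rw [Finset.sum_ite_mem, Finset.univ_inter]
    have h4 : ∑ s ∈ T', μ ω * (l' s * σ ω s) = μ ω := by
      rw [show ∑ s ∈ T', μ ω * (l' s * σ ω s) = ∑ s ∈ T', l' s * x s ω from
        Finset.sum_congr rfl fun s _ => by simp only [hx']; ring]
      exact (hl'sum ω).trans (hTsum ω)
    have h2 : μ ω * ∑ s ∈ T', l' s * σ ω s = μ ω * 1 := by
      rw [Finset.mul_sum, mul_one, h4]
    rw [h1, mul_left_cancel₀ (ne_of_gt (hμpos ω)) h2]
  have hsig : ∀ s, sigPr μ σ' s = if s ∈ T' then l' s * sigPr μ σ s else 0 := by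
    intro s
    by_cases h : s ∈ T'
    · simp only [sigPr, hσ', if_pos h, Finset.mul_sum]
      apply Finset.sum_congr rfl
      intro ω _; ring
    · simp [sigPr, hσ', if_neg h]
  have hsigfacts : ∀ s, 0 < sigPr μ σ' s →
      s ∈ T' ∧ 0 < l' s ∧ 0 < sigPr μ σ s ∧ post μ σ' s = post μ σ s := by
    intro s hpos
    rw [hsig s] at hpos
    by_cases h : s ∈ T'
    · rw [if_pos h] at hpos
      have hσs : 0 ≤ sigPr μ σ s := Finset.sum_nonneg fun ω _ => mul_nonneg (hμpos ω).le (hσnn ω s)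
      have hl : 0 < l' s := by
        rcases lt_or_eq_of_le (hl'nn s h) with h1 | h1
        · exact h1
        · exfalso; rw [← h1, zero_mul] at hpos; exact lt_irrefl 0 hpos
      have hσp : 0 < sigPr μ σ s := by nlinarith
      refine ⟨h, hl, hσp, ?_⟩
      funext ω
      simp only [post, hσ', if_pos h, hsig s]
      rw [show μ ω * (l' s * σ ω s) = l' s * (μ ω * σ ω s) by ring]
      rw [show sigPr μ (fun ω s => if s ∈ T' then l' s * σ ω s else 0) s = l' s * sigPr μ σ s from
        (hsig s).trans (if_pos h)]
      rw [mul_div_mul_left _ _ (ne_of_gt hl)]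
    · rw [if_neg h] at hpos; exact absurd hpos (lt_irrefl 0)
  refine ⟨σ', hpol', ?_, ?_, ?_, ?_⟩
  · intro s hpos
    obtain ⟨_, _, hσp, hpost⟩ := hsigfacts s hpos
    rw [hpost]
    exact hstab s hσp
  · intro s hpos
    obtain ⟨_, _, hσp, hpost⟩ := hsigfacts s hpos
    rw [hpost]
    exact hind s hσp
  · have hss : {s : Pref A B × (A ≃ B) | ∃ ω, 0 < σ' ω s} ⊆ ↑T' := by
      intro s hs
      obtain ⟨ω, hω⟩ := hs
      by_contra h
      simp only [hσ', Finset.mem_coe] at h hω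
      rw [if_neg h] at hω
      exact lt_irrefl 0 hω
    calc Set.ncard {s : Pref A B × (A ≃ B) | ∃ ω, 0 < σ' ω s}
          ≤ Set.ncard (↑T' : Set (Pref A B × (A ≃ B))) :=
          Set.ncard_le_ncard hss T'.finite_toSet
      _ = T'.card := Set.ncard_coe_finset T'
      _ ≤ Fintype.card Ω := hcard
  · -- utility comparison
    have hpolUgen : ∀ (τ : Ω → Pref A B × (A ≃ B) → ℝ),
        polU μ τ (fun s ω => uMatch u s.2 ω)
          = ∑ s, ∑ ω, μ ω * τ ω s * uMatch u s.2 ω := by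
      intro τ
      rw [polU, Finset.sum_comm]
      · apply Finset.sum_congr rfl
        intro ω _
        rw [Finset.mul_sum]
        apply Finset.sum_congr rfl
        intro s _; ring
    have hLHS : polU μ σ (fun s ω => uMatch u s.2 ω) = ∑ s ∈ T, (1:ℝ) * c s := by
      rw [hpolUgen σ]
      simp only [one_mul, hc']
      symm
      apply Finset.sum_subset (Finset.subset_univ T)
      intro s _ hs
      apply Finset.sum_eq_zero
      intro ω _
      rw [hσ0 s hs ω]; ring
    have hRHS : polU μ σ' (fun s ω => uMatch u s.2 ω) = ∑ s ∈ T', l' s * c s := by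
      rw [hpolUgen σ']
      rw [← Finset.sum_subset (Finset.subset_univ T')]
      · apply Finset.sum_congr rfl
        intro s hs
        simp only [hc', Finset.mul_sum, hσ', if_pos hs]
        apply Finset.sum_congr rfl
        intro ω _; ring
      · intro s _ hs
        apply Finset.sum_eq_zero
        intro ω _
        simp [hσ', if_neg hs]
    rw [hLHS, hRHS]
    exact hl'obj


end MP
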